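/- Let λ be a strict partition and k ≥ 1. For a strict partition ν contained in λ, the skew diagram λ∖ν is a removable double k-ribbon of λ if and only if the set of parts of ν is obtained from the set of parts of λ by deleting two parts a > b ≥ 1 with a + b = k; in that case the head of the ribbon has diagonal value a. In particular, λ admits a removable double k-ribbon with head of diagonal value a if and only if both a and k − a are parts of λ and a > k − a, and the ribbon is then unique. -/

import Mathlib

def IsStrictPartition (s : Finset ℕ) : Prop := ∀ x ∈ s, 0 < x

/-- The `i`-th largest part of `s` (1-indexed); `0` if out of range. -/
def nthPart (s : Finset ℕ) (i : ℕ) : ℕ := (s.sort (· ≤ ·)).reverse.getD (i - 1) 0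

/-- The shifted diagram: row `i` (1-indexed) has cells `(i, j)` with `i ≤ j ≤ i + λᵢ - 1`. -/
def shiftedDiagram (s : Finset ℕ) : Set (ℕ × ℕ) :=
  {c | 1 ≤ c.1 ∧ c.1 ≤ c.2 ∧ c.2 + 1 ≤ c.1 + nthPart s c.1}

def skewDiag (lam nu : Finset ℕ) : Set (ℕ × ℕ) := shiftedDiagram lam \ shiftedDiagram nu

/-- Diagonal value `j - i + 1` of a cell `(i, j)`. -/
def diagVal (c : ℕ × ℕ) : ℕ := c.2 + 1 - c.1

def CellAdj (c d : ℕ × ℕ) : Prop :=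
  (c.1 = d.1 ∧ (c.2 + 1 = d.2 ∨ d.2 + 1 = c.2)) ∨
  (c.2 = d.2 ∧ (c.1 + 1 = d.1 ∨ d.1 + 1 = c.1))

def EdgeConnected (S : Set (ℕ × ℕ)) : Prop :=
  ∀ c ∈ S, ∀ d ∈ S, Relation.ReflTransGen (fun x y => CellAdj x y ∧ x ∈ S ∧ y ∈ S) c d

def IsHead (S : Set (ℕ × ℕ)) (c : ℕ × ℕ) : Prop :=
  c ∈ S ∧ ∀ d ∈ S, diagVal d ≤ diagVal c

def IsTail (S : Set (ℕ × ℕ)) (c : ℕ × ℕ) : Prop :=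
  c ∈ S ∧ ∀ d ∈ S, diagVal c ≤ diagVal d

def IsRemovableSingleRibbon (lam nu : Finset ℕ) (k : ℕ) : Prop :=
  IsStrictPartition lam ∧ IsStrictPartition nu ∧
  shiftedDiagram nu ⊆ shiftedDiagram lam ∧
  (skewDiag lam nu).ncard = k ∧
  EdgeConnected (skewDiag lam nu) ∧
  Set.InjOn diagVal (skewDiag lam nu)

def IsDoubleDecomp (lam nu : Finset ℕ) (R S : Set (ℕ × ℕ)) : Prop :=
  IsStrictPartition lam ∧ IsStrictPartition nu ∧
  shiftedDiagram nu ⊆ shiftedDiagram lam ∧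
  Disjoint R S ∧ R ∪ S = skewDiag lam nu ∧
  R.Nonempty ∧ EdgeConnected R ∧ Set.InjOn diagVal R ∧
  S.Nonempty ∧ EdgeConnected S ∧ Set.InjOn diagVal S ∧
  S.ncard ≤ R.ncard ∧
  (∃ a, IsTail R (a, a)) ∧ (∃ b, IsTail S (b, b)) ∧
  (∃ mu : Finset ℕ, IsStrictPartition mu ∧ shiftedDiagram mu = shiftedDiagram lam \ R)

def IsRemovableDoubleRibbon (lam nu : Finset ℕ) (k : ℕ) : Prop :=
  (skewDiag lam nu).ncard = k ∧ ∃ R S, IsDoubleDecomp lam nu R S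

def IsRemovableRibbon (lam nu : Finset ℕ) (k : ℕ) : Prop :=
  IsRemovableSingleRibbon lam nu k ∨ IsRemovableDoubleRibbon lam nu k

def mfun (s : Finset ℕ) (d : ℕ) : ℕ := (s.filter (fun x => d ≤ x)).card

lemma mfun_eq_filter (s : Finset ℕ) (d : ℕ) :
    mfun s d = ((s.sort (· ≤ ·)).reverse.filter (fun x => d ≤ x)).length := by
  have h2 : List.Perm (s.sort (· ≤ ·)).reverse s.toList :=
    (List.reverse_perm _).trans (Finset.sort_perm_toList _ _)
  rw [List.Perm.length_eq (h2.filter _), ← Multiset.coe_card, ← Multiset.filter_coe,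
    Finset.coe_toList]
  rfl

lemma sorted_rev (s : Finset ℕ) : List.Pairwise (fun a b => b ≤ a) (s.sort (· ≤ ·)).reverse := by
  rw [List.pairwise_reverse]; exact Finset.pairwise_sort s _

lemma rev_anti (s : Finset ℕ) : ∀ p q (hpq : p ≤ q) (hq : q < (s.sort (· ≤ ·)).reverse.length),
    (s.sort (· ≤ ·)).reverse[q] ≤ (s.sort (· ≤ ·)).reverse[p]'(lt_of_le_of_lt hpq hq) := by
  intro p q hpq hq
  rcases eq_or_lt_of_le hpq with rfl | h
  · exact le_refl _
  · exact (List.pairwise_iff_getElem.mp (sorted_rev s)) p q _ hq h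

lemma le_nthPart_iff (s : Finset ℕ) {i d : ℕ} (hi : 1 ≤ i) (hd : 1 ≤ d) :
    d ≤ nthPart s i ↔ i ≤ mfun s d := by
  rw [mfun_eq_filter]
  set R := (s.sort (· ≤ ·)).reverse with hR
  constructor
  · intro h
    have hnp : nthPart s i = R.getD (i-1) 0 := rfl
    have hne : R.getD (i-1) 0 ≠ 0 := by rw [← hnp]; omega
    have hlt : i - 1 < R.length := by
      by_contra hc
      exact hne (List.getD_eq_default _ _ (le_of_not_gt hc))
    have hget : nthPart s i = R[i-1] := List.getD_eq_getElem _ _ hlt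
    have htake : (R.take i).filter (fun x => d ≤ x) = R.take i := by
      apply List.filter_eq_self.mpr
      intro a ha
      rcases List.mem_iff_getElem.mp ha with ⟨q, hq, rfl⟩
      have hq' : q < R.length := lt_of_lt_of_le hq (by simp [List.length_take])
      rw [List.getElem_take]
      have : R[i-1] ≤ R[q] := by
        apply rev_anti s q (i-1) ?_ hlt
        have := hq; simp [List.length_take] at this; omega
      simp only [decide_eq_true_eq]
      omega
    have hlen : i ≤ R.length := by omega
    calc i = (R.take i).length := by simp [List.length_take]; omega
    _ = ((R.take i).filter (fun x => d ≤ x)).length := by rw [htake]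
    _ ≤ (R.filter (fun x => d ≤ x)).length :=
        List.Sublist.length_le (List.Sublist.filter _ (List.take_sublist i R))
  · intro h
    have hlen : (R.filter (fun x => d ≤ x)).length ≤ R.length :=
      List.Sublist.length_le List.filter_sublist
    have hlt : i - 1 < R.length := by omega
    have hnp : nthPart s i = R.getD (i-1) 0 := rfl
    have hget : nthPart s i = R[i-1] := by rw [hnp]; exact List.getD_eq_getElem _ _ hlt
    rw [hget]
    by_contra hc
    push_neg at hc
    have hsplit : R = R.take (i-1) ++ R.drop (i-1) := (List.take_append_drop _ _).symm
    have hdrop : (R.drop (i-1)).filter (fun x => d ≤ x) = [] := by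
      apply List.filter_eq_nil_iff.mpr
      intro a ha
      rcases List.mem_iff_getElem.mp ha with ⟨q, hq, rfl⟩
      rw [List.getElem_drop]
      have hq' : i - 1 + q < R.length := by simp [List.length_drop] at hq; omega
      have : R[i-1+q] ≤ R[i-1] := rev_anti s (i-1) (i-1+q) (by omega) hq'
      simp only [decide_eq_true_eq]
      omega
    have : (R.filter (fun x => d ≤ x)).length ≤ i - 1 := by
      conv_lhs => rw [hsplit]
      rw [List.filter_append, hdrop, List.append_nil]
      calc ((R.take (i-1)).filter _).length ≤ (R.take (i-1)).length :=
            List.Sublist.length_le List.filter_sublist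
      _ ≤ i - 1 := by simp [List.length_take]
    omega


lemma mfun_anti (s : Finset ℕ) {d e : ℕ} (h : d ≤ e) : mfun s e ≤ mfun s d := by
  apply Finset.card_le_card
  intro x hx
  rw [Finset.mem_filter] at hx ⊢
  exact ⟨hx.1, le_trans h hx.2⟩

lemma mfun_succ (s : Finset ℕ) (d : ℕ) :
    mfun s d = mfun s (d+1) + (if d ∈ s then 1 else 0) := by
  unfold mfun
  have h : s.filter (fun x => d ≤ x) = s.filter (fun x => d+1 ≤ x ∨ x = d) :=
    Finset.filter_congr (fun x _ => by constructor <;> (intro h'; omega))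
  rw [h, Finset.filter_or, Finset.card_union_of_disjoint, Finset.filter_eq']
  · split <;> simp
  · rw [Finset.disjoint_left]
    intro x hx hx'
    rw [Finset.mem_filter] at hx hx'
    omega

lemma mem_iff_mfun (s : Finset ℕ) (d : ℕ) : d ∈ s ↔ mfun s (d+1) < mfun s d := by
  rw [mfun_succ s d]
  split <;> simp_all

lemma mfun_drop (s : Finset ℕ) (d : ℕ) : mfun s d ≤ mfun s (d+1) + 1 := by
  have := mfun_succ s d; split at this <;> omega

lemma eq_of_mfun_eq {s t : Finset ℕ} (h : ∀ d, mfun s d = mfun t d) : s = t := by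
  ext x
  rw [mem_iff_mfun, mem_iff_mfun, h, h]

lemma eq_of_mfun_eq' {s t : Finset ℕ} (hs : IsStrictPartition s) (ht : IsStrictPartition t)
    (h : ∀ d, 1 ≤ d → mfun s d = mfun t d) : s = t := by
  ext x
  rcases Nat.eq_zero_or_pos x with rfl | hx
  · constructor
    · intro hc; exact absurd (hs 0 hc) (lt_irrefl 0)
    · intro hc; exact absurd (ht 0 hc) (lt_irrefl 0)
  · rw [mem_iff_mfun, mem_iff_mfun, h x (by omega), h (x+1) (by omega)]

lemma mfun_erase {s : Finset ℕ} {a : ℕ} (ha : a ∈ s) (d : ℕ) :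
    mfun (s.erase a) d = mfun s d - (if d ≤ a then 1 else 0) := by
  unfold mfun
  rw [Finset.filter_erase]
  split
  · rw [Finset.card_erase_of_mem (Finset.mem_filter.mpr ⟨ha, by assumption⟩)]
  · rw [Finset.erase_eq_of_notMem (fun hc => by rw [Finset.mem_filter] at hc; omega)]
    omega

lemma mem_shifted (s : Finset ℕ) (i j : ℕ) :
    (i, j) ∈ shiftedDiagram s ↔ 1 ≤ i ∧ i ≤ j ∧ i ≤ mfun s (j + 1 - i) := by
  unfold shiftedDiagram
  simp only [Set.mem_setOf_eq]
  constructor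
  · rintro ⟨h1, h2, h3⟩
    refine ⟨h1, h2, ?_⟩
    rw [← le_nthPart_iff s h1 (show 1 ≤ j + 1 - i by omega)]
    omega
  · rintro ⟨h1, h2, h3⟩
    refine ⟨h1, h2, ?_⟩
    have := (le_nthPart_iff s h1 (show 1 ≤ j + 1 - i by omega)).mpr h3
    omega

lemma mem_shifted' (s : Finset ℕ) (i e : ℕ) :
    (i, i + e) ∈ shiftedDiagram s ↔ 1 ≤ i ∧ i ≤ mfun s (e + 1) := by
  rw [mem_shifted]
  have : i + e + 1 - i = e + 1 := by omega
  rw [this]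
  omega

lemma mem_skew' (lam nu : Finset ℕ) (i e : ℕ) :
    (i, i + e) ∈ skewDiag lam nu ↔ 1 ≤ i ∧ mfun nu (e+1) < i ∧ i ≤ mfun lam (e+1) := by
  unfold skewDiag
  rw [Set.mem_diff, mem_shifted', mem_shifted']
  omega

lemma mem_diagram_fst_le_snd {s : Finset ℕ} {c : ℕ × ℕ} (h : c ∈ shiftedDiagram s) :
    1 ≤ c.1 ∧ c.1 ≤ c.2 := ⟨h.1, h.2.1⟩

lemma cell_repr {c : ℕ × ℕ} (h : c.1 ≤ c.2) : c = (c.1, c.1 + (c.2 - c.1)) := by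
  ext <;> simp <;> omega

lemma diagVal_repr (i e : ℕ) : diagVal (i, i + e) = e + 1 := by unfold diagVal; omega

lemma mfun_le_card (s : Finset ℕ) (d : ℕ) : mfun s d ≤ s.card := Finset.card_filter_le _ _

lemma le_sup_of_mfun_pos {s : Finset ℕ} {d : ℕ} (h : 1 ≤ mfun s d) : d ≤ s.sup id := by
  obtain ⟨x, hx⟩ := Finset.card_pos.mp h
  rw [Finset.mem_filter] at hx
  exact le_trans hx.2 (Finset.le_sup (f := id) hx.1)

lemma shifted_finite (s : Finset ℕ) : (shiftedDiagram s).Finite := by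
  apply Set.Finite.subset (Set.finite_Icc (1,1) (s.card + s.sup id, s.card + s.sup id))
  rintro ⟨i, j⟩ hc
  rw [mem_shifted] at hc
  obtain ⟨h1, h2, h3⟩ := hc
  have hcard : mfun s (j+1-i) ≤ s.card := mfun_le_card s _
  have hsup : j + 1 - i ≤ s.sup id := le_sup_of_mfun_pos (by omega)
  rw [Set.mem_Icc]
  constructor <;> rw [Prod.le_def] <;> constructor <;> simp <;> omega


lemma cellAdj_symm {c d : ℕ × ℕ} (h : CellAdj c d) : CellAdj d c := by
  unfold CellAdj at *; tauto

lemma edgeConnected_of_chain (T : Set (ℕ × ℕ)) (f : ℕ → ℕ × ℕ) (n : ℕ)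
    (hT : T = f '' Set.Iio n)
    (hadj : ∀ e, e + 1 < n → CellAdj (f e) (f (e+1))) : EdgeConnected T := by
  set r := fun x y => CellAdj x y ∧ x ∈ T ∧ y ∈ T with hr
  have hmem : ∀ e, e < n → f e ∈ T := by
    intro e he; rw [hT]; exact ⟨e, he, rfl⟩
  have hchain : ∀ e, e < n → Relation.ReflTransGen r (f 0) (f e) := by
    intro e
    induction e with
    | zero => intro _; exact Relation.ReflTransGen.refl
    | succ m ih =>
      intro h
      exact Relation.ReflTransGen.tail (ih (by omega))
        ⟨hadj m h, hmem m (by omega), hmem (m+1) h⟩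
  have hsymm : Symmetric r := by
    intro x y ⟨h1, h2, h3⟩; exact ⟨cellAdj_symm h1, h3, h2⟩
  intro c hc d hd
  rw [hT] at hc hd
  obtain ⟨e, he, rfl⟩ := hc
  obtain ⟨e', he', rfl⟩ := hd
  exact Relation.ReflTransGen.trans
    (by haveI : Std.Symm r := ⟨hsymm⟩; exact Std.Symm.symm _ _ (hchain e he)) (hchain e' he')

section Construction
variable {lam : Finset ℕ} {a b : ℕ}

def rcell (lam : Finset ℕ) (e : ℕ) : ℕ × ℕ := (mfun lam (e+1), mfun lam (e+1) + e)
def scell (lam : Finset ℕ) (e : ℕ) : ℕ × ℕ := (mfun lam (e+1) - 1, mfun lam (e+1) - 1 + e)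

@[simp] lemma rcell_fst (e : ℕ) : (rcell lam e).1 = mfun lam (e+1) := rfl
@[simp] lemma rcell_snd (e : ℕ) : (rcell lam e).2 = mfun lam (e+1) + e := rfl
@[simp] lemma scell_fst (e : ℕ) : (scell lam e).1 = mfun lam (e+1) - 1 := rfl
@[simp] lemma scell_snd (e : ℕ) : (scell lam e).2 = mfun lam (e+1) - 1 + e := rfl
@[simp] lemma diagVal_rcell (e : ℕ) : diagVal (rcell lam e) = e + 1 := by
  unfold diagVal rcell; simp; omega
lemma diagVal_scell (e : ℕ) (h : 1 ≤ mfun lam (e+1)) : diagVal (scell lam e) = e + 1 := by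
  unfold diagVal scell; simp; omega

def Rset (lam : Finset ℕ) (a : ℕ) : Set (ℕ × ℕ) := rcell lam '' Set.Iio a
def Sset (lam : Finset ℕ) (b : ℕ) : Set (ℕ × ℕ) := scell lam '' Set.Iio b

lemma mem_Rset {c : ℕ × ℕ} : c ∈ Rset lam a ↔ ∃ e, e < a ∧ rcell lam e = c := by
  unfold Rset; constructor
  · rintro ⟨e, he, rfl⟩; exact ⟨e, by simpa using he, rfl⟩
  · rintro ⟨e, he, rfl⟩; exact ⟨e, by simpa using he, rfl⟩

lemma mem_Sset {c : ℕ × ℕ} : c ∈ Sset lam b ↔ ∃ e, e < b ∧ scell lam e = c := by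
  unfold Sset; constructor
  · rintro ⟨e, he, rfl⟩; exact ⟨e, by simpa using he, rfl⟩
  · rintro ⟨e, he, rfl⟩; exact ⟨e, by simpa using he, rfl⟩

lemma mfun_pos_of_mem {d : ℕ} (ha : a ∈ lam) (hd : d ≤ a) : 1 ≤ mfun lam d :=
  Finset.card_pos.mpr ⟨a, Finset.mem_filter.mpr ⟨ha, hd⟩⟩

lemma mfun_two_of_mem {d : ℕ} (ha : a ∈ lam) (hb : b ∈ lam) (hab : b ≠ a)
    (hda : d ≤ a) (hdb : d ≤ b) : 2 ≤ mfun lam d := by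
  have hs : ({a, b} : Finset ℕ) ⊆ lam.filter (fun x => d ≤ x) := by
    intro x hx
    rw [Finset.mem_insert, Finset.mem_singleton] at hx
    rcases hx with rfl | rfl <;> exact Finset.mem_filter.mpr ⟨by assumption, by omega⟩
  calc 2 = ({a, b} : Finset ℕ).card := by
        rw [Finset.card_insert_of_notMem (by simp [hab.symm]), Finset.card_singleton]
  _ ≤ _ := Finset.card_le_card hs
  _ = mfun lam d := rfl

variable (ha : a ∈ lam) (hb : b ∈ lam) (hba : b < a) (hb1 : 1 ≤ b)

include ha hb hba in
lemma mfun_nu_eq (d : ℕ) :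
    mfun lam d = mfun ((lam.erase a).erase b) d
      + (if d ≤ a then 1 else 0) + (if d ≤ b then 1 else 0) := by
  have hb' : b ∈ lam.erase a := Finset.mem_erase.mpr ⟨by omega, hb⟩
  rw [mfun_erase hb', mfun_erase ha]
  have h1 : d ≤ a → 1 ≤ mfun lam d := mfun_pos_of_mem ha
  have h2 : d ≤ b → 2 ≤ mfun lam d := fun h => mfun_two_of_mem ha hb (by omega) (by omega) h
  split <;> split <;> omega

include ha hb hba in
lemma skew_eq_union :
    Rset lam a ∪ Sset lam b = skewDiag lam ((lam.erase a).erase b) := by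
  ext c
  rw [Set.mem_union, mem_Rset, mem_Sset]
  constructor
  · rintro (⟨e, he, rfl⟩ | ⟨e, he, rfl⟩) <;>
      [ (have h1 : 1 ≤ mfun lam (e+1) := mfun_pos_of_mem ha (by omega));
        (have h2 : 2 ≤ mfun lam (e+1) := mfun_two_of_mem ha hb (by omega) (by omega) (by omega))] <;>
      have hm := mfun_nu_eq ha hb hba (e+1) <;>
      [ (show rcell lam e ∈ _; have : rcell lam e = (mfun lam (e+1), mfun lam (e+1) + e) := rfl; rw [this]);
        (show scell lam e ∈ _; have : scell lam e = (mfun lam (e+1) - 1, mfun lam (e+1) - 1 + e) := rfl; rw [this])] <;>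
      rw [mem_skew'] <;> split at hm <;> split at hm <;> omega
  · intro hc
    obtain ⟨i, j⟩ := c
    obtain ⟨h1, hij⟩ := mem_diagram_fst_le_snd hc.1
    obtain ⟨e, rfl⟩ : ∃ e, j = i + e := ⟨j - i, by omega⟩
    rw [mem_skew'] at hc
    have hm := mfun_nu_eq ha hb hba (e+1)
    by_cases hea : e + 1 ≤ a
    · have hp : 1 ≤ mfun lam (e+1) := mfun_pos_of_mem ha hea
      by_cases heb : e + 1 ≤ b
      · have h2 : 2 ≤ mfun lam (e+1) := mfun_two_of_mem ha hb (by omega) hea heb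
        simp only [if_pos hea, if_pos heb] at hm
        rcases (by omega : i = mfun lam (e+1) ∨ i = mfun lam (e+1) - 1) with h | h
        · exact Or.inl ⟨e, by omega, by rw [h]; rfl⟩
        · exact Or.inr ⟨e, by omega, by unfold scell; rw [h]⟩
      · simp only [if_pos hea, if_neg heb] at hm
        have h : i = mfun lam (e+1) := by omega
        exact Or.inl ⟨e, by omega, by rw [h]; rfl⟩
    · exfalso
      simp only [if_neg hea, if_neg (show ¬ (e+1 ≤ b) by omega)] at hm
      omega

include ha hb hba in
lemma Rset_disjoint_Sset : Disjoint (Rset lam a) (Sset lam b) := by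
  rw [Set.disjoint_left]
  rintro c hcR hcS
  rw [mem_Rset] at hcR; rw [mem_Sset] at hcS
  obtain ⟨e, he, rfl⟩ := hcR
  obtain ⟨e', he', hc⟩ := hcS
  have h2 : 2 ≤ mfun lam (e'+1) := mfun_two_of_mem ha hb (by omega) (by omega) (by omega)
  have hfst := congrArg Prod.fst hc
  have hsnd := congrArg Prod.snd hc
  rw [scell_fst, rcell_fst] at hfst
  rw [scell_snd, rcell_snd] at hsnd
  have hee : e' = e := by omega
  subst hee
  omega

lemma rcell_injOn : Set.InjOn (rcell lam) (Set.Iio a) := by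
  intro e _ e' _ h
  have hfst := congrArg Prod.fst h
  have hsnd := congrArg Prod.snd h
  rw [rcell_fst, rcell_fst] at hfst
  rw [rcell_snd, rcell_snd] at hsnd
  omega

lemma scell_injOn : Set.InjOn (scell lam) (Set.Iio b) := by
  intro e _ e' _ h
  have hfst := congrArg Prod.fst h
  have hsnd := congrArg Prod.snd h
  rw [scell_fst, scell_fst] at hfst
  rw [scell_snd, scell_snd] at hsnd
  omega

lemma Rset_card : (Rset lam a).ncard = a := by
  rw [Rset, Set.ncard_image_of_injOn rcell_injOn, ← Finset.coe_Iio, Set.ncard_coe_finset,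
    Nat.card_Iio]

lemma Sset_card : (Sset lam b).ncard = b := by
  rw [Sset, Set.ncard_image_of_injOn scell_injOn, ← Finset.coe_Iio, Set.ncard_coe_finset,
    Nat.card_Iio]

lemma Rset_finite : (Rset lam a).Finite := Set.Finite.image _ (Set.finite_Iio a)
lemma Sset_finite : (Sset lam b).Finite := Set.Finite.image _ (Set.finite_Iio b)

lemma Rset_edgeConnected : EdgeConnected (Rset lam a) := by
  apply edgeConnected_of_chain _ (rcell lam) a rfl
  intro e he
  have h1 := mfun_anti lam (show e+1 ≤ e+1+1 by omega)
  have h2 := mfun_drop lam (e+1)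
  unfold CellAdj
  rw [rcell_fst, rcell_fst, rcell_snd, rcell_snd]
  rcases (by omega : mfun lam (e+1+1) = mfun lam (e+1) ∨ mfun lam (e+1+1) + 1 = mfun lam (e+1))
    with h | h
  · left; omega
  · right; omega

include hb in
lemma Sset_edgeConnected : EdgeConnected (Sset lam b) := by
  apply edgeConnected_of_chain _ (scell lam) b rfl
  intro e he
  have h1 := mfun_anti lam (show e+1 ≤ e+1+1 by omega)
  have h2 := mfun_drop lam (e+1)
  have h3 : 1 ≤ mfun lam (e+1+1) := mfun_pos_of_mem hb (by omega)
  unfold CellAdj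
  rw [scell_fst, scell_fst, scell_snd, scell_snd]
  rcases (by omega : mfun lam (e+1+1) = mfun lam (e+1) ∨ mfun lam (e+1+1) + 1 = mfun lam (e+1))
    with h | h
  · left; omega
  · right; omega

include ha in
lemma Rset_injOn : Set.InjOn diagVal (Rset lam a) := by
  rintro c hc d hd h
  rw [mem_Rset] at hc hd
  obtain ⟨e, he, rfl⟩ := hc
  obtain ⟨e', he', rfl⟩ := hd
  rw [diagVal_rcell, diagVal_rcell] at h
  have : e = e' := by omega
  rw [this]

include ha hb hba in
lemma Sset_injOn : Set.InjOn diagVal (Sset lam b) := by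
  rintro c hc d hd h
  rw [mem_Sset] at hc hd
  obtain ⟨e, he, rfl⟩ := hc
  obtain ⟨e', he', rfl⟩ := hd
  rw [diagVal_scell e (mfun_pos_of_mem ha (by omega)),
    diagVal_scell e' (mfun_pos_of_mem ha (by omega))] at h
  have : e = e' := by omega
  rw [this]

lemma Rset_nonempty (ha1 : 1 ≤ a) : (Rset lam a).Nonempty := ⟨_, ⟨0, by simp; omega, rfl⟩⟩
lemma Sset_nonempty' (hb1 : 1 ≤ b) : (Sset lam b).Nonempty := ⟨_, ⟨0, by simp; omega, rfl⟩⟩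

lemma Rset_tail (ha1 : 1 ≤ a) : IsTail (Rset lam a) (mfun lam 1, mfun lam 1) := by
  constructor
  · rw [mem_Rset]; exact ⟨0, ha1, rfl⟩
  · intro d hd
    rw [mem_Rset] at hd
    obtain ⟨e, he, rfl⟩ := hd
    rw [diagVal_rcell]
    show mfun lam 1 + 1 - mfun lam 1 ≤ e + 1
    omega

lemma Sset_tail (hb1' : 1 ≤ b) : IsTail (Sset lam b) (mfun lam 1 - 1, mfun lam 1 - 1) := by
  constructor
  · rw [mem_Sset]; exact ⟨0, hb1', rfl⟩
  · intro d hd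
    rw [mem_Sset] at hd
    obtain ⟨e, he, rfl⟩ := hd
    show diagVal _ ≤ diagVal (scell lam e)
    unfold diagVal scell
    simp
    omega

include ha in
lemma shifted_erase_eq : shiftedDiagram (lam.erase a) = shiftedDiagram lam \ Rset lam a := by
  ext c
  obtain ⟨i, j⟩ := c
  by_cases hij : 1 ≤ i ∧ i ≤ j
  case neg =>
    constructor
    · intro h; exact absurd (mem_diagram_fst_le_snd h) hij
    · intro h; exact absurd (mem_diagram_fst_le_snd h.1) hij
  obtain ⟨e, rfl⟩ : ∃ e, j = i + e := ⟨j - i, by omega⟩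
  have hin : (i, i + e) ∈ Rset lam a ↔ e < a ∧ i = mfun lam (e+1) := by
    rw [mem_Rset]
    constructor
    · rintro ⟨e', he', hc⟩
      have hfst := congrArg Prod.fst hc
      have hsnd := congrArg Prod.snd hc
      rw [rcell_fst] at hfst
      rw [rcell_snd] at hsnd
      have hee : e' = e := by omega
      subst hee
      constructor <;> omega
    · rintro ⟨h1, h2⟩
      exact ⟨e, h1, by rw [h2]; rfl⟩
  rw [Set.mem_diff, mem_shifted', mem_shifted', hin, mfun_erase ha (e+1)]
  by_cases hea : e + 1 ≤ a
  · have h1 : 1 ≤ mfun lam (e+1) := mfun_pos_of_mem ha hea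
    simp only [if_pos hea]
    omega
  · simp only [if_neg hea]
    omega

end Construction

section Converse
variable {lam nu : Finset ℕ}

lemma diagVal_ge_one {c : ℕ × ℕ} (h : c.1 ≤ c.2) : 1 ≤ diagVal c := by
  unfold diagVal; omega

lemma adj_diag {c d : ℕ × ℕ} (hc : 1 ≤ c.1 ∧ c.1 ≤ c.2) (hd : 1 ≤ d.1 ∧ d.1 ≤ d.2)
    (h : CellAdj c d) : diagVal d = diagVal c + 1 ∨ diagVal c = diagVal d + 1 := by
  unfold CellAdj at h; unfold diagVal; rcases h with ⟨h1, h2 | h2⟩ | ⟨h1, h2 | h2⟩ <;> omega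

lemma diag_interval {T : Set (ℕ × ℕ)} (hT : ∀ c ∈ T, 1 ≤ c.1 ∧ c.1 ≤ c.2)
    {c d : ℕ × ℕ} (hc : c ∈ T)
    (h : Relation.ReflTransGen (fun x y => CellAdj x y ∧ x ∈ T ∧ y ∈ T) c d) :
    ∀ v, min (diagVal c) (diagVal d) ≤ v → v ≤ max (diagVal c) (diagVal d) →
      ∃ e ∈ T, diagVal e = v := by
  induction h with
  | refl => intro v h1 h2; exact ⟨c, hc, by omega⟩
  | @tail x y hcx hstep ih =>
    intro v h1 h2
    have hx : x ∈ T := hstep.2.1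
    have hy : y ∈ T := hstep.2.2
    have hd := adj_diag (hT x hx) (hT y hy) hstep.1
    by_cases hv : v = diagVal y
    · exact ⟨y, hy, hv.symm⟩
    · exact ih v (by omega) (by omega)

lemma exists_head {T : Set (ℕ × ℕ)} (hfin : T.Finite) (hne : T.Nonempty) :
    ∃ c, IsHead T c := by
  obtain ⟨c, hc, h⟩ := Set.exists_max_image T diagVal hfin hne
  exact ⟨c, hc, h⟩

lemma diag_image_eq {T : Set (ℕ × ℕ)} (hfin : T.Finite) (hne : T.Nonempty)
    (hT : ∀ c ∈ T, 1 ≤ c.1 ∧ c.1 ≤ c.2)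
    (hconn : EdgeConnected T) (hinj : Set.InjOn diagVal T)
    (htail : ∃ a, (a, a) ∈ T) :
    diagVal '' T = Set.Icc 1 T.ncard := by
  obtain ⟨t, ht⟩ := htail
  obtain ⟨c0, hc0, hmax⟩ := exists_head hfin hne
  have hdt : diagVal (t, t) = 1 := by unfold diagVal; omega
  have him : diagVal '' T = Set.Icc 1 (diagVal c0) := by
    apply Set.Subset.antisymm
    · rintro v ⟨c, hc, rfl⟩
      exact Set.mem_Icc.mpr ⟨diagVal_ge_one (hT c hc).2, hmax c hc⟩
    · rintro v hv
      rw [Set.mem_Icc] at hv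
      obtain ⟨e, he, hev⟩ := diag_interval hT ht (hconn _ ht _ hc0) v
        (by omega) (by omega)
      exact ⟨e, he, hev⟩
  have hcard : T.ncard = diagVal c0 := by
    have h1 : T.ncard = (Set.Icc 1 (diagVal c0)).ncard := by
      rw [← him, Set.ncard_image_of_injOn hinj]
    rw [← Finset.coe_Icc, Set.ncard_coe_finset, Nat.card_Icc] at h1
    have hd1 : 1 ≤ diagVal c0 := hdt ▸ hmax _ ht
    omega
  rw [him, hcard]

lemma mfun_le_of_subset (h : shiftedDiagram nu ⊆ shiftedDiagram lam) (e : ℕ) :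
    mfun nu (e+1) ≤ mfun lam (e+1) := by
  by_cases h0 : mfun nu (e+1) = 0
  · omega
  · have hmem : (mfun nu (e+1), mfun nu (e+1) + e) ∈ shiftedDiagram nu :=
      (mem_shifted' nu _ e).mpr ⟨by omega, le_refl _⟩
    have := (mem_shifted' lam _ e).mp (h hmem)
    omega

lemma skew_slice_eq (lam nu : Finset ℕ) (e : ℕ) :
    skewDiag lam nu ∩ diagVal ⁻¹' {e+1}
      = (fun i => (i, i + e)) '' Set.Ioc (mfun nu (e+1)) (mfun lam (e+1)) := by
  ext c
  constructor
  · rintro ⟨hc, hd⟩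
    obtain ⟨i, j⟩ := c
    obtain ⟨h1, hij⟩ := mem_diagram_fst_le_snd hc.1
    simp only [Set.mem_preimage, Set.mem_singleton_iff] at hd
    have hj : j = i + e := by unfold diagVal at hd; omega
    subst hj
    rw [mem_skew'] at hc
    exact ⟨i, Set.mem_Ioc.mpr ⟨by omega, by omega⟩, rfl⟩
  · rintro ⟨i, hi, rfl⟩
    rw [Set.mem_Ioc] at hi
    refine ⟨(mem_skew' lam nu i e).mpr ⟨by omega, by omega, by omega⟩, ?_⟩
    simp only [Set.mem_preimage, Set.mem_singleton_iff]
    exact diagVal_repr i e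

lemma skew_slice_ncard (lam nu : Finset ℕ) (e : ℕ) :
    (skewDiag lam nu ∩ diagVal ⁻¹' {e+1}).ncard
      = mfun lam (e+1) - mfun nu (e+1) := by
  rw [skew_slice_eq, Set.ncard_image_of_injOn (fun x _ y _ h => by
      simpa using congrArg Prod.fst h),
    ← Finset.coe_Ioc, Set.ncard_coe_finset, Nat.card_Ioc]

lemma slice_ncard_of_injOn {T : Set (ℕ × ℕ)} (hinj : Set.InjOn diagVal T)
    (him : diagVal '' T = Set.Icc 1 n) (e : ℕ) :
    (T ∩ diagVal ⁻¹' {e+1}).ncard = if e+1 ≤ n then 1 else 0 := by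
  split
  case isTrue h =>
    have : (e+1) ∈ diagVal '' T := by rw [him]; exact Set.mem_Icc.mpr ⟨by omega, h⟩
    obtain ⟨c0, hc0, hd0⟩ := this
    have : T ∩ diagVal ⁻¹' {e+1} = {c0} := by
      ext c
      constructor
      · rintro ⟨hc, hd⟩
        simp only [Set.mem_preimage, Set.mem_singleton_iff] at hd ⊢
        exact hinj hc hc0 (by rw [hd, hd0])
      · rintro rfl
        exact ⟨hc0, by simp [hd0]⟩
    rw [this, Set.ncard_singleton]
  case isFalse h =>
    have : T ∩ diagVal ⁻¹' {e+1} = ∅ := by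
      ext c
      simp only [Set.mem_inter_iff, Set.mem_preimage, Set.mem_singleton_iff, Set.mem_empty_iff_false,
        iff_false, not_and]
      intro hc hd
      have : diagVal c ∈ Set.Icc 1 n := by rw [← him]; exact ⟨c, hc, rfl⟩
      rw [Set.mem_Icc] at this
      omega
    rw [this, Set.ncard_empty]

lemma ribbon_characterize {k : ℕ} (h : IsRemovableDoubleRibbon lam nu k) :
    ∃ a b, a ∈ lam ∧ b ∈ lam ∧ b < a ∧ 1 ≤ b ∧ a + b = k ∧ nu = (lam.erase a).erase b := by
  obtain ⟨hcard, R, S, hlam, hnu, hsub, hdisj, hunion, hRne, hRconn, hRinj, hSne, hSconn, hSinj,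
    hSR, ⟨ta, hta⟩, ⟨tb, htb⟩, _mu⟩ := h
  have hskew_sub : skewDiag lam nu ⊆ shiftedDiagram lam := Set.diff_subset
  have hskew_fin : (skewDiag lam nu).Finite := (shifted_finite lam).subset hskew_sub
  have hRsub : R ⊆ skewDiag lam nu := hunion ▸ Set.subset_union_left
  have hSsub : S ⊆ skewDiag lam nu := hunion ▸ Set.subset_union_right
  have hRfin : R.Finite := hskew_fin.subset hRsub
  have hSfin : S.Finite := hskew_fin.subset hSsub
  have hcells : ∀ c ∈ skewDiag lam nu, 1 ≤ c.1 ∧ c.1 ≤ c.2 :=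
    fun c hc => mem_diagram_fst_le_snd (hskew_sub hc)
  set a := R.ncard with hadef
  set b := S.ncard with hbdef
  have himR : diagVal '' R = Set.Icc 1 a :=
    diag_image_eq hRfin hRne (fun c hc => hcells c (hRsub hc)) hRconn hRinj ⟨ta, hta.1⟩
  have himS : diagVal '' S = Set.Icc 1 b :=
    diag_image_eq hSfin hSne (fun c hc => hcells c (hSsub hc)) hSconn hSinj ⟨tb, htb.1⟩
  have ha1 : 1 ≤ a := (Set.ncard_pos hRfin).mpr hRne
  have hb1 : 1 ≤ b := (Set.ncard_pos hSfin).mpr hSne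
  -- slice equation
  have hslice : ∀ e : ℕ, mfun lam (e+1) = mfun nu (e+1)
      + (if e+1 ≤ a then 1 else 0) + (if e+1 ≤ b then 1 else 0) := by
    intro e
    have hle := mfun_le_of_subset hsub e
    have hcount := skew_slice_ncard lam nu e
    have hsp : skewDiag lam nu ∩ diagVal ⁻¹' {e+1}
        = (R ∩ diagVal ⁻¹' {e+1}) ∪ (S ∩ diagVal ⁻¹' {e+1}) := by
      rw [← hunion, Set.union_inter_distrib_right]
    have hdisj2 : Disjoint (R ∩ diagVal ⁻¹' {e+1}) (S ∩ diagVal ⁻¹' {e+1}) :=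
      hdisj.mono Set.inter_subset_left Set.inter_subset_left
    have hcount2 : (skewDiag lam nu ∩ diagVal ⁻¹' {e+1}).ncard
        = (R ∩ diagVal ⁻¹' {e+1}).ncard + (S ∩ diagVal ⁻¹' {e+1}).ncard := by
      rw [hsp, Set.ncard_union_eq hdisj2 (hRfin.subset Set.inter_subset_left)
        (hSfin.subset Set.inter_subset_left)]
    rw [hcount, slice_ncard_of_injOn hRinj himR e, slice_ncard_of_injOn hSinj himS e] at hcount2
    by_cases h1 : e+1 ≤ a <;> by_cases h2 : e+1 ≤ b <;> simp only [if_pos, if_neg, h1, h2, if_true, if_false] at hcount2 ⊢ <;> simp [h1, h2] at hcount2 ⊢ <;> omega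
  have hsliceD : ∀ d : ℕ, 1 ≤ d → mfun lam d = mfun nu d
      + (if d ≤ a then 1 else 0) + (if d ≤ b then 1 else 0) := by
    intro d hd
    have := hslice (d-1)
    rwa [show d-1+1 = d by omega] at this
  -- b < a
  have hba : b < a := by
    rcases lt_or_ge b a with h | h
    · exact h
    · exfalso
      have hab : a = b := by omega
      have h1 := hsliceD a ha1
      have h2 := hsliceD (a+1) (by omega)
      have h3 := mfun_drop lam a
      have h4 := mfun_anti nu (show a ≤ a+1 by omega)
      rw [if_pos (le_refl a), if_pos (by omega : a ≤ b)] at h1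
      rw [if_neg (by omega), if_neg (by omega)] at h2
      omega
  -- a ∈ lam
  have haL : a ∈ lam := by
    rw [mem_iff_mfun]
    have h1 := hsliceD a ha1
    have h2 := hsliceD (a+1) (by omega)
    have h4 := mfun_anti nu (show a ≤ a+1 by omega)
    rw [if_pos (le_refl a), if_neg (by omega)] at h1
    rw [if_neg (by omega), if_neg (by omega)] at h2
    omega
  have hbL : b ∈ lam := by
    rw [mem_iff_mfun]
    have h1 := hsliceD b hb1
    have h2 := hsliceD (b+1) (by omega)
    have h4 := mfun_anti nu (show b ≤ b+1 by omega)
    rw [if_pos (by omega : b ≤ a), if_pos (le_refl b)] at h1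
    rw [if_pos (by omega : b+1 ≤ a), if_neg (by omega : ¬ (b+1 ≤ b))] at h2
    omega
  -- k = a + b
  have hk : a + b = k := by
    rw [← hcard, ← hunion, Set.ncard_union_eq hdisj hRfin hSfin]
  -- nu = erase erase
  have hnueq : nu = (lam.erase a).erase b := by
    have hstrict2 : IsStrictPartition ((lam.erase a).erase b) :=
      fun x hx => hlam x (Finset.mem_of_mem_erase (Finset.mem_of_mem_erase hx))
    apply eq_of_mfun_eq' hnu hstrict2
    intro d hd
    have h1 := hsliceD d hd
    have h2 := mfun_nu_eq haL hbL hba d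
    omega
  exact ⟨a, b, haL, hbL, hba, hb1, hk, hnueq⟩

lemma shifted_subset_of_mfun_le {s t : Finset ℕ} (h : ∀ e, mfun s (e+1) ≤ mfun t (e+1)) :
    shiftedDiagram s ⊆ shiftedDiagram t := by
  rintro ⟨i, j⟩ hc
  obtain ⟨h1, hij⟩ := mem_diagram_fst_le_snd hc
  obtain ⟨e, rfl⟩ : ∃ e, j = i + e := ⟨j - i, by omega⟩
  rw [mem_shifted'] at hc ⊢
  exact ⟨hc.1, le_trans hc.2 (h e)⟩

section Assemble
variable {lam : Finset ℕ} {a b : ℕ}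
variable (hlam : IsStrictPartition lam) (ha : a ∈ lam) (hb : b ∈ lam) (hba : b < a) (hb1 : 1 ≤ b)

include ha hb hba in
lemma erase_subset_diag :
    shiftedDiagram ((lam.erase a).erase b) ⊆ shiftedDiagram lam := by
  apply shifted_subset_of_mfun_le
  intro e
  have := mfun_nu_eq ha hb hba (e+1)
  omega

include hlam ha hb hba hb1 in
lemma construct_ribbon : IsRemovableDoubleRibbon lam ((lam.erase a).erase b) (a + b) := by
  have hdisj := Rset_disjoint_Sset ha hb hba
  have hunion := skew_eq_union ha hb hba
  constructor
  · rw [← hunion, Set.ncard_union_eq hdisj Rset_finite Sset_finite, Rset_card, Sset_card]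
  · refine ⟨Rset lam a, Sset lam b, hlam,
      fun x hx => hlam x (Finset.mem_of_mem_erase (Finset.mem_of_mem_erase hx)),
      erase_subset_diag ha hb hba, hdisj, hunion,
      Rset_nonempty (by omega), Rset_edgeConnected, Rset_injOn ha,
      Sset_nonempty' hb1, Sset_edgeConnected hb, Sset_injOn ha hb hba,
      by rw [Rset_card, Sset_card]; omega,
      ⟨mfun lam 1, Rset_tail (by omega)⟩, ⟨mfun lam 1 - 1, Sset_tail hb1⟩,
      ⟨lam.erase a, fun x hx => hlam x (Finset.mem_of_mem_erase hx), shifted_erase_eq ha⟩⟩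

include ha hb hba hb1 in
lemma diag_le_a : ∀ c ∈ skewDiag lam ((lam.erase a).erase b), diagVal c ≤ a := by
  rw [← skew_eq_union ha hb hba]
  rintro c hc
  rw [Set.mem_union, mem_Rset, mem_Sset] at hc
  rcases hc with ⟨e, he, rfl⟩ | ⟨e, he, rfl⟩
  · rw [diagVal_rcell]; omega
  · rw [diagVal_scell e (mfun_pos_of_mem ha (by omega))]; omega

include ha hb hba hb1 in
lemma head_mem : IsHead (skewDiag lam ((lam.erase a).erase b)) (rcell lam (a-1))
    ∧ diagVal (rcell lam (a-1)) = a := by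
  have hd : diagVal (rcell lam (a-1)) = a := by rw [diagVal_rcell]; omega
  have hmem : rcell lam (a-1) ∈ skewDiag lam ((lam.erase a).erase b) := by
    rw [← skew_eq_union ha hb hba]
    exact Or.inl (mem_Rset.mpr ⟨a-1, by omega, rfl⟩)
  exact ⟨⟨hmem, fun c hc => by rw [hd]; exact diag_le_a ha hb hba hb1 c hc⟩, hd⟩

include ha hb hba hb1 in
lemma head_val : ∀ c, IsHead (skewDiag lam ((lam.erase a).erase b)) c → diagVal c = a := by
  intro c hc
  obtain ⟨hh, hd⟩ := head_mem ha hb hba hb1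
  have h1 := diag_le_a ha hb hba hb1 c hc.1
  have h2 := hc.2 _ hh.1
  omega

end Assemble

/-- Characterization of removable double `k`-ribbons of a strict partition
`λ`: they correspond to deleting two parts `a > b ≥ 1` with `a + b = k`; the head has
diagonal value `a`, and the ribbon with a given head diagonal value is unique. -/
theorem stmt2 (k : ℕ) (hk : 1 ≤ k) (lam nu : Finset ℕ)
    (hlam : IsStrictPartition lam) (hnu : IsStrictPartition nu)
    (hsub : shiftedDiagram nu ⊆ shiftedDiagram lam) :
    (IsRemovableDoubleRibbon lam nu k ↔
      (∃ a ∈ lam, ∃ b ∈ lam, b < a ∧ 1 ≤ b ∧ a + b = k ∧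
        nu = (lam.erase a).erase b)) ∧
    (∀ a ∈ lam, ∀ b ∈ lam, b < a → 1 ≤ b → a + b = k →
       nu = (lam.erase a).erase b →
       ∀ c, IsHead (skewDiag lam nu) c → diagVal c = a) ∧
    (∀ a : ℕ,
      ((∃ nu' : Finset ℕ, IsRemovableDoubleRibbon lam nu' k ∧
          ∃ c, IsHead (skewDiag lam nu') c ∧ diagVal c = a) ↔
        (a ∈ lam ∧ k - a ∈ lam ∧ k - a < a)) ∧
      (∀ nu₁ nu₂ : Finset ℕ,
        IsRemovableDoubleRibbon lam nu₁ k →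
        (∃ c, IsHead (skewDiag lam nu₁) c ∧ diagVal c = a) →
        IsRemovableDoubleRibbon lam nu₂ k →
        (∃ c, IsHead (skewDiag lam nu₂) c ∧ diagVal c = a) →
        nu₁ = nu₂)) := by
  refine ⟨?_, ?_, ?_⟩
  · constructor
    · intro h
      obtain ⟨a, b, haL, hbL, hba, hb1, hab, hnueq⟩ := ribbon_characterize h
      exact ⟨a, haL, b, hbL, hba, hb1, hab, hnueq⟩
    · rintro ⟨a, haL, b, hbL, hba, hb1, hab, rfl⟩
      rw [← hab]
      exact construct_ribbon hlam haL hbL hba hb1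
  · rintro a haL b hbL hba hb1 hab rfl c hc
    exact head_val haL hbL hba hb1 c hc
  · intro a
    constructor
    · constructor
      · rintro ⟨nu', hrib, c, hhead, hdiag⟩
        obtain ⟨a', b', haL, hbL, hba, hb1, hab, hnueq⟩ := ribbon_characterize hrib
        subst hnueq
        have hval := head_val haL hbL hba hb1 c hhead
        have haa : a = a' := by omega
        subst haa
        have hbb : k - a = b' := by omega
        rw [hbb]
        exact ⟨haL, hbL, by omega⟩
      · rintro ⟨haL, hkaL, hlt⟩
        have hb1 : 1 ≤ k - a := hlam _ hkaL
        have hab : a + (k - a) = k := by omega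
        have hcon : IsRemovableDoubleRibbon lam ((lam.erase a).erase (k-a)) k := by
          have hcc := construct_ribbon hlam haL hkaL hlt hb1
          rwa [hab] at hcc
        exact ⟨(lam.erase a).erase (k-a), hcon,
          rcell lam (a-1), (head_mem haL hkaL hlt hb1).1, (head_mem haL hkaL hlt hb1).2⟩
    · rintro nu₁ nu₂ h1 ⟨c1, hh1, hd1⟩ h2 ⟨c2, hh2, hd2⟩
      obtain ⟨a1, b1, haL1, hbL1, hba1, hb11, hab1, hnueq1⟩ := ribbon_characterize h1
      obtain ⟨a2, b2, haL2, hbL2, hba2, hb12, hab2, hnueq2⟩ := ribbon_characterize h2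
      subst hnueq1; subst hnueq2
      have hv1 := head_val haL1 hbL1 hba1 hb11 c1 hh1
      have hv2 := head_val haL2 hbL2 hba2 hb12 c2 hh2
      have ha12 : a1 = a2 := by omega
      have hb12' : b1 = b2 := by omega
      rw [ha12, hb12']
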